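/- arXiv:2501.12142 — 4 statements merged into one kernel-verified Lean document; each statement's English description precedes it below -/
import Mathlib

section
/- Define Δ : (ℤ → ℝ) → (ℤ → ℝ) by Δ(u)_i = Σ_{k∈ℤ} 2^{−|k|}(u_i − u_{i+k})^3. Then for any ρ ∈ ℝ and R > 0, Δ is Lipschitz continuous on the set {u : ℤ → ℝ | sup_i |u_i − iρ| ≤ R} with respect to the sup-metric, with Lipschitz constant Σ_{k∈ℤ} 6(|k||ρ| + 2R)^2 2^{−|k|}. -/
/-- The long-range cubic interaction operator. -/
noncomputable def longRangeDelta (u : ℤ → ℝ) (i : ℤ) : ℝ :=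
  ∑' k : ℤ, (2 : ℝ) ^ (-|k| : ℤ) * (u i - u (i + k)) ^ 3

lemma aux_nat_summable (m : ℕ) (a b : ℝ) :
    Summable (fun n : ℕ => ((n : ℝ) * a + b) ^ m * (1 / 2 : ℝ) ^ n) := by
  have key : ∀ n : ℕ, ((n : ℝ) * a + b) ^ m * (1 / 2 : ℝ) ^ n
      = ∑ j ∈ Finset.range (m + 1),
          (n : ℝ) ^ j * (1 / 2 : ℝ) ^ n * (a ^ j * b ^ (m - j) * (m.choose j : ℝ)) := by
    intro n
    rw [add_pow, Finset.sum_mul]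
    refine Finset.sum_congr rfl fun j _ => ?_
    ring
  rw [funext key]
  apply summable_sum
  intro j _
  exact (summable_pow_mul_geometric_of_norm_lt_one (R := ℝ) j (by norm_num)).mul_right _

lemma aux_int_summable (m : ℕ) (a b : ℝ) :
    Summable (fun k : ℤ => ((|k| : ℝ) * a + b) ^ m * (2 : ℝ) ^ (-|k| : ℤ)) := by
  have h2 : ∀ n : ℕ, (2 : ℝ) ^ (-(n : ℤ)) = (1 / 2 : ℝ) ^ n := by
    intro n
    rw [zpow_neg, zpow_natCast, one_div, inv_pow]
  apply Summable.of_nat_of_neg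
  · have := aux_nat_summable m a b
    refine this.congr fun n => ?_
    simp [h2 n]
  · have := aux_nat_summable m a b
    refine this.congr fun n => ?_
    have : |(-(n : ℤ))| = (n : ℤ) := by simp
    rw [this]
    simp [h2 n]

lemma cube_diff_bound (a b X c : ℝ) (ha : |a| ≤ X) (hb : |b| ≤ X) (hab : |a - b| ≤ 2 * c) :
    |a ^ 3 - b ^ 3| ≤ 6 * X ^ 2 * c := by
  have hX : 0 ≤ X := le_trans (abs_nonneg a) ha
  have e : a ^ 3 - b ^ 3 = (a - b) * (a ^ 2 + a * b + b ^ 2) := by ring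
  rw [e, abs_mul]
  have h1 : |a ^ 2 + a * b + b ^ 2| ≤ 3 * X ^ 2 := by
    calc |a ^ 2 + a * b + b ^ 2| ≤ |a ^ 2 + a * b| + |b ^ 2| := abs_add_le _ _
      _ ≤ |a ^ 2| + |a * b| + |b ^ 2| := by gcongr; exact abs_add_le _ _
      _ = |a| ^ 2 + |a| * |b| + |b| ^ 2 := by rw [abs_mul, ← abs_pow, ← abs_pow]
      _ ≤ X ^ 2 + X * X + X ^ 2 := by gcongr
      _ = 3 * X ^ 2 := by ring
  calc |a - b| * |a ^ 2 + a * b + b ^ 2| ≤ (2 * c) * (3 * X ^ 2) := by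
        apply mul_le_mul hab h1 (abs_nonneg _)
        linarith [abs_nonneg (a - b)]
    _ = 6 * X ^ 2 * c := by ring

/-- The long-range cubic interaction operator is Lipschitz on the ball of
radius `R` around the linear configuration of slope `ρ`, with Lipschitz
constant `∑_k 6(|k||ρ|+2R)² 2^{-|k|}` for the sup-metric. -/
theorem longRangeDelta_lipschitz (ρ R : ℝ) (hR : 0 < R)
    (u u' : ℤ → ℝ)
    (hu : ∀ i : ℤ, |u i - (i : ℝ) * ρ| ≤ R)
    (hu' : ∀ i : ℤ, |u' i - (i : ℝ) * ρ| ≤ R)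
    (C : ℝ) (hC : 0 ≤ C) (hd : ∀ i : ℤ, |u i - u' i| ≤ C) :
    ∀ i : ℤ, |longRangeDelta u i - longRangeDelta u' i| ≤
      (∑' k : ℤ, 6 * ((|k| : ℝ) * |ρ| + 2 * R) ^ 2 * (2 : ℝ) ^ (-|k| : ℤ)) * C := by
  intro i
  set X : ℤ → ℝ := fun k => (|k| : ℝ) * |ρ| + 2 * R with hXdef
  have hXnonneg : ∀ k, 0 ≤ X k := by
    intro k
    have : (0:ℝ) ≤ (|k| : ℝ) * |ρ| := by positivity
    simp only [hXdef]; linarith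
  have hpow_pos : ∀ k : ℤ, (0:ℝ) < (2 : ℝ) ^ (-|k| : ℤ) := fun k => zpow_pos (by norm_num) _
  -- bound on configurations
  have hbound : ∀ (v : ℤ → ℝ), (∀ j, |v j - (j : ℝ) * ρ| ≤ R) →
      ∀ k : ℤ, |v i - v (i + k)| ≤ X k := by
    intro v hv k
    have e : v i - v (i + k) =
        (v i - (i : ℝ) * ρ) - (v (i + k) - ((i + k : ℤ) : ℝ) * ρ) + (-(k : ℝ)) * ρ := by
      push_cast; ring
    rw [e]
    calc |(v i - (i : ℝ) * ρ) - (v (i + k) - ((i + k : ℤ) : ℝ) * ρ) + (-(k : ℝ)) * ρ|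
        ≤ |(v i - (i : ℝ) * ρ) - (v (i + k) - ((i + k : ℤ) : ℝ) * ρ)| + |(-(k : ℝ)) * ρ| :=
          abs_add_le _ _
      _ ≤ (|v i - (i : ℝ) * ρ| + |v (i + k) - ((i + k : ℤ) : ℝ) * ρ|) + (|k| : ℝ) * |ρ| := by
          gcongr
          · exact abs_sub _ _
          · rw [abs_mul]
            simp [abs_neg]
      _ ≤ (R + R) + (|k| : ℝ) * |ρ| := by gcongr <;> [exact hv i; exact hv (i + k)]
      _ = X k := by simp only [hXdef]; ring
  have hau := hbound u hu
  have hau' := hbound u' hu'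
  have hdiff : ∀ k : ℤ, |(u i - u (i + k)) - (u' i - u' (i + k))| ≤ 2 * C := by
    intro k
    have e2 : (u i - u (i + k)) - (u' i - u' (i + k))
        = (u i - u' i) - (u (i + k) - u' (i + k)) := by ring
    rw [e2]
    calc |(u i - u' i) - (u (i + k) - u' (i + k))|
        ≤ |u i - u' i| + |u (i + k) - u' (i + k)| := abs_sub _ _
      _ ≤ C + C := by gcongr <;> [exact hd i; exact hd (i + k)]
      _ = 2 * C := by ring
  -- pointwise bound on term differences
  have hterm : ∀ k : ℤ,
      |(2 : ℝ) ^ (-|k| : ℤ) * (u i - u (i + k)) ^ 3 -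
        (2 : ℝ) ^ (-|k| : ℤ) * (u' i - u' (i + k)) ^ 3|
      ≤ 6 * (X k) ^ 2 * (2 : ℝ) ^ (-|k| : ℤ) * C := by
    intro k
    rw [← mul_sub, abs_mul, abs_of_pos (hpow_pos k)]
    have := cube_diff_bound (u i - u (i + k)) (u' i - u' (i + k)) (X k) C
      (hau k) (hau' k) (hdiff k)
    calc (2 : ℝ) ^ (-|k| : ℤ) * |(u i - u (i + k)) ^ 3 - (u' i - u' (i + k)) ^ 3|
        ≤ (2 : ℝ) ^ (-|k| : ℤ) * (6 * (X k) ^ 2 * C) := by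
          exact mul_le_mul_of_nonneg_left this (hpow_pos k).le
      _ = 6 * (X k) ^ 2 * (2 : ℝ) ^ (-|k| : ℤ) * C := by ring
  -- summability
  have hSX3 : Summable (fun k : ℤ => (X k) ^ 3 * (2 : ℝ) ^ (-|k| : ℤ)) :=
    aux_int_summable 3 |ρ| (2 * R)
  have hsum_u : Summable (fun k : ℤ => (2 : ℝ) ^ (-|k| : ℤ) * (u i - u (i + k)) ^ 3) := by
    apply hSX3.of_norm_bounded
    intro k
    rw [Real.norm_eq_abs, abs_mul, abs_of_pos (hpow_pos k), abs_pow]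
    rw [mul_comm ((X k) ^ 3) _]
    exact mul_le_mul_of_nonneg_left (by gcongr; exact hau k) (hpow_pos k).le
  have hsum_u' : Summable (fun k : ℤ => (2 : ℝ) ^ (-|k| : ℤ) * (u' i - u' (i + k)) ^ 3) := by
    apply hSX3.of_norm_bounded
    intro k
    rw [Real.norm_eq_abs, abs_mul, abs_of_pos (hpow_pos k), abs_pow]
    rw [mul_comm ((X k) ^ 3) _]
    exact mul_le_mul_of_nonneg_left (by gcongr; exact hau' k) (hpow_pos k).le
  have hSX2 : Summable (fun k : ℤ => 6 * (X k) ^ 2 * (2 : ℝ) ^ (-|k| : ℤ) * C) := by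
    have := (aux_int_summable 2 |ρ| (2 * R)).mul_left 6
    exact (this.mul_right C).congr (fun k => by ring)
  have hsum_diff : Summable (fun k : ℤ =>
      (2 : ℝ) ^ (-|k| : ℤ) * (u i - u (i + k)) ^ 3 -
        (2 : ℝ) ^ (-|k| : ℤ) * (u' i - u' (i + k)) ^ 3) := hsum_u.sub hsum_u'
  -- main computation
  have e : longRangeDelta u i - longRangeDelta u' i =
      ∑' k : ℤ, ((2 : ℝ) ^ (-|k| : ℤ) * (u i - u (i + k)) ^ 3 -
        (2 : ℝ) ^ (-|k| : ℤ) * (u' i - u' (i + k)) ^ 3) := by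
    rw [longRangeDelta, longRangeDelta, ← Summable.tsum_sub hsum_u hsum_u']
  rw [e]
  calc |∑' k : ℤ, ((2 : ℝ) ^ (-|k| : ℤ) * (u i - u (i + k)) ^ 3 -
        (2 : ℝ) ^ (-|k| : ℤ) * (u' i - u' (i + k)) ^ 3)|
      ≤ ∑' k : ℤ, |(2 : ℝ) ^ (-|k| : ℤ) * (u i - u (i + k)) ^ 3 -
        (2 : ℝ) ^ (-|k| : ℤ) * (u' i - u' (i + k)) ^ 3| := by
        have := norm_tsum_le_tsum_norm (f := fun k : ℤ =>
          (2 : ℝ) ^ (-|k| : ℤ) * (u i - u (i + k)) ^ 3 -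
            (2 : ℝ) ^ (-|k| : ℤ) * (u' i - u' (i + k)) ^ 3) (by
          simpa [Real.norm_eq_abs] using hsum_diff.abs)
        simpa [Real.norm_eq_abs] using this
    _ ≤ ∑' k : ℤ, 6 * (X k) ^ 2 * (2 : ℝ) ^ (-|k| : ℤ) * C := by
        apply Summable.tsum_le_tsum hterm _ hSX2
        simpa [Real.norm_eq_abs] using hsum_diff.abs
    _ = (∑' k : ℤ, 6 * ((|k| : ℝ) * |ρ| + 2 * R) ^ 2 * (2 : ℝ) ^ (-|k| : ℤ)) * C := by
        rw [← tsum_mul_right]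
end

section
/- Let f : ℝ^d → ℝ be C² with at least one nondegenerate critical point, and suppose the set of periods of f contains a lattice Γ in ℝ^d. Then ∇f satisfies the Aubry criterion: there exist a set O ⊆ ℝ^d, and constants R, r, m > 0 such that every ball of radius R contains a point of O, ∇f vanishes on O, and for every z ∈ O and x, y ∈ B̄_r(z), ‖∇f(x) − ∇f(y)‖ ≥ m‖x − y‖. -/
open Metric

/-- A C² function whose period group contains a lattice and which has a
nondegenerate critical point has a gradient satisfying the Aubry criterion. -/
theorem periodic_gradient_satisfies_aubry {d : ℕ}
    (f : EuclideanSpace ℝ (Fin d) → ℝ) (hf : ContDiff ℝ 2 f)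
    (B : Module.Basis (Fin d) ℝ (EuclideanSpace ℝ (Fin d)))
    (hper : ∀ (c : Fin d → ℤ) (x : EuclideanSpace ℝ (Fin d)),
      f (x + ∑ i, (c i : ℝ) • B i) = f x)
    (hcrit : ∃ z : EuclideanSpace ℝ (Fin d), gradient f z = 0 ∧
      LinearMap.det
        (fderiv ℝ (gradient f) z :
          EuclideanSpace ℝ (Fin d) →ₗ[ℝ] EuclideanSpace ℝ (Fin d)) ≠ 0) :
    ∃ (O : Set (EuclideanSpace ℝ (Fin d))) (R r m : ℝ),
      0 < R ∧ 0 < r ∧ 0 < m ∧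
      (∀ x : EuclideanSpace ℝ (Fin d), ∃ z ∈ O, ‖x - z‖ ≤ R) ∧
      (∀ z ∈ O, gradient f z = 0) ∧
      (∀ z ∈ O, ∀ x ∈ closedBall z r, ∀ y ∈ closedBall z r,
        m * ‖x - y‖ ≤ ‖gradient f x - gradient f y‖) := by
  classical
  obtain ⟨z₀, hz₀, hdet⟩ := hcrit
  set g : (EuclideanSpace ℝ (Fin d)) → (EuclideanSpace ℝ (Fin d)) := gradient f with hgdef
  have hfd : Differentiable ℝ f := hf.differentiable (by norm_num)
  -- g is C¹
  have hg1 : ContDiff ℝ 1 g := by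
    have h1 : ContDiff ℝ 1 (fderiv ℝ f) := hf.fderiv_right (le_refl 2)
    exact ((InnerProductSpace.toDual ℝ (EuclideanSpace ℝ (Fin d))).symm.toLinearIsometry.contDiff).comp h1
  have hgd : Differentiable ℝ g := hg1.differentiable one_ne_zero
  -- periodicity of the gradient
  have hgper : ∀ (c : Fin d → ℤ) (x : (EuclideanSpace ℝ (Fin d))), g (x + ∑ i, (c i : ℝ) • B i) = g x := by
    intro c x
    have hT : HasFDerivAt (fun y : (EuclideanSpace ℝ (Fin d)) => y + ∑ i, (c i : ℝ) • B i)
        (ContinuousLinearMap.id ℝ (EuclideanSpace ℝ (Fin d))) x := (hasFDerivAt_id x).add_const _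
    have hcomp : fderiv ℝ (fun y : (EuclideanSpace ℝ (Fin d)) => f (y + ∑ i, (c i : ℝ) • B i)) x
        = (fderiv ℝ f (x + ∑ i, (c i : ℝ) • B i)).comp (ContinuousLinearMap.id ℝ (EuclideanSpace ℝ (Fin d))) :=
      ((hfd _).hasFDerivAt.comp x hT).fderiv
    have hfun : (fun y : (EuclideanSpace ℝ (Fin d)) => f (y + ∑ i, (c i : ℝ) • B i)) = f := funext (hper c)
    have hfd' : fderiv ℝ f (x + ∑ i, (c i : ℝ) • B i) = fderiv ℝ f x := by
      rw [hfun] at hcomp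
      simpa using hcomp.symm
    show (InnerProductSpace.toDual ℝ (EuclideanSpace ℝ (Fin d))).symm (fderiv ℝ f (x + ∑ i, (c i : ℝ) • B i))
        = (InnerProductSpace.toDual ℝ (EuclideanSpace ℝ (Fin d))).symm (fderiv ℝ f x)
    rw [hfd']
  -- the invertible derivative at z₀
  set A : (EuclideanSpace ℝ (Fin d)) →L[ℝ] (EuclideanSpace ℝ (Fin d)) := fderiv ℝ g z₀ with hA
  let e : (EuclideanSpace ℝ (Fin d)) ≃L[ℝ] (EuclideanSpace ℝ (Fin d)) :=
    (LinearMap.equivOfDetNeZero (A : (EuclideanSpace ℝ (Fin d)) →ₗ[ℝ] (EuclideanSpace ℝ (Fin d))) hdet).toContinuousLinearEquiv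
  have he : ∀ v : (EuclideanSpace ℝ (Fin d)), e v = A v := fun v => rfl
  set K : ℝ := ‖(e.symm : (EuclideanSpace ℝ (Fin d)) →L[ℝ] (EuclideanSpace ℝ (Fin d)))‖ with hK
  have hK0 : 0 ≤ K := norm_nonneg _
  have hlow : ∀ v : (EuclideanSpace ℝ (Fin d)), ‖v‖ ≤ K * ‖A v‖ := by
    intro v
    calc ‖v‖ = ‖e.symm (e v)‖ := by simp
    _ ≤ K * ‖e v‖ := (e.symm : (EuclideanSpace ℝ (Fin d)) →L[ℝ] (EuclideanSpace ℝ (Fin d))).le_opNorm _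
    _ = K * ‖A v‖ := by rw [he]
  set m₀ : ℝ := (K + 1)⁻¹ with hm₀
  have hm₀pos : 0 < m₀ := by positivity
  have hAlow : ∀ v : (EuclideanSpace ℝ (Fin d)), m₀ * ‖v‖ ≤ ‖A v‖ := by
    intro v
    rw [hm₀, inv_mul_le_iff₀ (by positivity)]
    calc ‖v‖ ≤ K * ‖A v‖ := hlow v
    _ ≤ (K + 1) * ‖A v‖ := by nlinarith [norm_nonneg (A v)]
  -- continuity of the derivative of g: choose the radius r
  have hcont : ContinuousAt (fderiv ℝ g) z₀ := (hg1.continuous_fderiv one_ne_zero).continuousAt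
  obtain ⟨δ, hδpos, hδ⟩ := Metric.continuousAt_iff.1 hcont (m₀ / 2) (by positivity)
  set r : ℝ := δ / 2 with hr
  have hrpos : 0 < r := by positivity
  have hball : ∀ x ∈ closedBall z₀ r, ‖fderiv ℝ g x - A‖ ≤ m₀ / 2 := by
    intro x hx
    have hxδ : dist x z₀ < δ := lt_of_le_of_lt (mem_closedBall.1 hx) (by rw [hr]; linarith)
    have := hδ hxδ
    rw [dist_eq_norm] at this
    exact this.le
  -- the quantitative injectivity estimate around z₀
  have hkey : ∀ x ∈ closedBall z₀ r, ∀ y ∈ closedBall z₀ r,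
      m₀ / 2 * ‖x - y‖ ≤ ‖g x - g y‖ := by
    intro x hx y hy
    have hdiff : ∀ w ∈ closedBall z₀ r, DifferentiableAt ℝ (fun u => g u - A u) w :=
      fun w _ => (hgd w).sub (A.differentiableAt)
    have hbound : ∀ w ∈ closedBall z₀ r, ‖fderiv ℝ (fun u => g u - A u) w‖ ≤ m₀ / 2 := by
      intro w hw
      have : fderiv ℝ (fun u => g u - A u) w = fderiv ℝ g w - A := by
        rw [fderiv_fun_sub (hgd w) A.differentiableAt, A.fderiv]
      rw [this]
      exact hball w hw
    have hmv := (convex_closedBall z₀ r).norm_image_sub_le_of_norm_fderiv_le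
        hdiff hbound hy hx
    -- hmv : ‖(g x - A x) - (g y - A y)‖ ≤ m₀/2 * ‖x - y‖
    have h1 : ‖A (x - y)‖ - ‖g x - g y‖ ≤ m₀ / 2 * ‖x - y‖ := by
      have h2 : ‖A (x - y)‖ ≤ ‖g x - g y‖ + ‖(g x - A x) - (g y - A y)‖ := by
        have : A (x - y) = (g x - g y) - ((g x - A x) - (g y - A y)) := by
          rw [map_sub]; abel
        rw [this]
        exact norm_sub_le _ _
      linarith
    have h3 := hAlow (x - y)
    linarith
  -- assemble the data
  refine ⟨{z | ∃ c : Fin d → ℤ, z = z₀ + ∑ i, (c i : ℝ) • B i},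
    1 + ∑ i, ‖B i‖, r, m₀ / 2, ?_, hrpos, by positivity, ?_, ?_, ?_⟩
  · have : (0:ℝ) ≤ ∑ i, ‖B i‖ := Finset.sum_nonneg fun i _ => norm_nonneg _
    linarith
  · -- R-net property
    intro x
    set a : Fin d → ℝ := fun i => B.repr (x - z₀) i with ha
    set c : Fin d → ℤ := fun i => round (a i) with hc
    refine ⟨z₀ + ∑ i, (c i : ℝ) • B i, ⟨c, rfl⟩, ?_⟩
    have hrepr : x - z₀ = ∑ i, a i • B i := (B.sum_repr (x - z₀)).symm
    have hxz : x - (z₀ + ∑ i, (c i : ℝ) • B i) = ∑ i, (a i - (c i : ℝ)) • B i := by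
      rw [Finset.sum_congr rfl fun i _ => sub_smul (a i) ((c i : ℝ)) (B i),
        Finset.sum_sub_distrib, ← hrepr]
      abel
    rw [hxz]
    calc ‖∑ i, (a i - (c i : ℝ)) • B i‖ ≤ ∑ i, ‖(a i - (c i : ℝ)) • B i‖ :=
        norm_sum_le _ _
    _ ≤ ∑ i, ‖B i‖ := by
        refine Finset.sum_le_sum fun i _ => ?_
        rw [norm_smul, Real.norm_eq_abs]
        have h1 : |a i - (c i : ℝ)| ≤ 1 := le_trans (abs_sub_round (a i)) (by norm_num)
        nlinarith [norm_nonneg (B i), abs_nonneg (a i - (c i : ℝ))]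
    _ ≤ 1 + ∑ i, ‖B i‖ := by linarith
  · -- gradient vanishes on O
    rintro z ⟨c, rfl⟩
    exact (hgper c z₀).trans hz₀
  · -- quantitative injectivity around each lattice point
    rintro z ⟨c, rfl⟩ x hx y hy
    set t : (EuclideanSpace ℝ (Fin d)) := ∑ i, (c i : ℝ) • B i with ht
    have hx' : x - t ∈ closedBall z₀ r := by
      rw [mem_closedBall, dist_eq_norm] at hx ⊢
      have hxe : x - t - z₀ = x - (z₀ + t) := by abel
      rw [hxe]; exact hx
    have hy' : y - t ∈ closedBall z₀ r := by
      rw [mem_closedBall, dist_eq_norm] at hy ⊢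
      have hye : y - t - z₀ = y - (z₀ + t) := by abel
      rw [hye]; exact hy
    have hgx : g (x - t) = g x := by
      have := hgper c (x - t); rw [sub_add_cancel] at this; exact this.symm
    have hgy : g (y - t) = g y := by
      have := hgper c (y - t); rw [sub_add_cancel] at this; exact this.symm
    have := hkey (x - t) hx' (y - t) hy'
    rw [hgx, hgy] at this
    have hxy : x - t - (y - t) = x - y := by abel
    rw [hxy] at this
    exact this
end

section
/- Let f : ℝ → ℝ be an almost-periodic function of class C² (for every ε > 0 there is a relatively dense set Λ_ε ⊆ ℝ with ‖f(·+x) − f‖_{C²(ℝ)} < ε for all x ∈ Λ_ε) that has a nondegenerate critical point. Then the set of critical points of f with second derivative bounded below in absolute value by some fixed m > 0 is relatively dense in ℝ: there exist R, m > 0 and a set O ⊆ ℝ such that every interval of length 2R contains a point of O, f'(z) = 0 for z ∈ O, and |f''(x)| ≥ m for all x within distance r of O for some r > 0. -/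
open Set

/-- For a C² almost-periodic function on ℝ with a nondegenerate critical point,
the set of critical points with second derivative uniformly bounded away from
zero in a neighborhood is relatively dense. -/
theorem almost_periodic_critical_points_relatively_dense
    (f : ℝ → ℝ) (hf : ContDiff ℝ 2 f)
    (hap : ∀ ε > (0 : ℝ), ∃ Λ : Set ℝ,
      (∃ L > (0 : ℝ), ∀ x : ℝ, ∃ t ∈ Λ, |x - t| ≤ L) ∧
      ∀ t ∈ Λ, ∀ x : ℝ,
        |f (x + t) - f x| < ε ∧
        |deriv f (x + t) - deriv f x| < ε ∧
        |deriv (deriv f) (x + t) - deriv (deriv f) x| < ε)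
    (hcrit : ∃ z : ℝ, deriv f z = 0 ∧ deriv (deriv f) z ≠ 0) :
    ∃ (O : Set ℝ) (R m r : ℝ), 0 < R ∧ 0 < m ∧ 0 < r ∧
      (∀ x : ℝ, ∃ z ∈ O, |x - z| ≤ R) ∧
      (∀ z ∈ O, deriv f z = 0) ∧
      (∀ z ∈ O, ∀ x : ℝ, |x - z| ≤ r → m ≤ |deriv (deriv f) x|) := by
  obtain ⟨z₀, hz₀, hz₀''⟩ := hcrit
  obtain ⟨c, hcdef⟩ : ∃ c, deriv (deriv f) z₀ = c := ⟨_, rfl⟩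
  obtain ⟨A, hAdef⟩ : ∃ A, |c| = A := ⟨_, rfl⟩
  have hA0 : 0 < A := hAdef ▸ abs_pos.mpr (hcdef ▸ hz₀'')
  -- regularity
  have h2 : ContDiff ℝ ((1:ℕ) + 1) f := by exact_mod_cast hf
  rw [contDiff_succ_iff_deriv] at h2
  have h1 : ContDiff ℝ ((0:ℕ) + 1) (deriv f) := by exact_mod_cast h2.2.2
  rw [contDiff_succ_iff_deriv] at h1
  have hcont'' : Continuous (deriv (deriv f)) := h1.2.2.continuous
  have hdiff' : Differentiable ℝ (deriv f) := h1.1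
  have hcont' : Continuous (deriv f) := hdiff'.continuous
  -- continuity of f'' at z₀: a uniform neighborhood bound
  obtain ⟨δ, hδ, hnear⟩ : ∃ δ > 0, ∀ x : ℝ, |x - z₀| ≤ 2 * δ →
      |deriv (deriv f) x - c| < A / 4 := by
    obtain ⟨δ₀, hδ₀, hball⟩ := Metric.continuousAt_iff.mp (hcont''.continuousAt (x := z₀))
        (A / 4) (by positivity)
    refine ⟨δ₀ / 3, by positivity, fun x hx => ?_⟩
    have h : dist x z₀ < δ₀ := by rw [Real.dist_eq]; linarith [abs_nonneg (x - z₀)]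
    have := hball h
    rwa [Real.dist_eq, hcdef] at this
  -- choose ε
  obtain ⟨ε, hε, hεδ, hεA⟩ : ∃ ε > 0, ε ≤ A * δ / 4 ∧ ε ≤ A / 4 := by
    refine ⟨A * min δ 1 / 4, by positivity, ?_, ?_⟩
    · have h := min_le_left δ 1
      have : A * min δ 1 ≤ A * δ := by nlinarith
      linarith
    · have h := min_le_right δ 1
      have : A * min δ 1 ≤ A * 1 := by nlinarith
      linarith
  have hε0 : 0 < ε := hε
  obtain ⟨Λ, ⟨L, hL, hdense⟩, htrans⟩ := hap ε hε0
  -- mean value theorem endpoint estimates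
  have mvt : ∀ a b : ℝ, a < b → ∃ ξ ∈ Ioo a b,
      deriv (deriv f) ξ = (deriv f b - deriv f a) / (b - a) :=
    fun a b hab => exists_deriv_eq_slope (deriv f) hab hcont'.continuousOn
      hdiff'.differentiableOn
  obtain ⟨ξp, hξp, hξpeq⟩ := mvt z₀ (z₀ + δ) (by linarith)
  obtain ⟨ξm, hξm, hξmeq⟩ := mvt (z₀ - δ) z₀ (by linarith)
  have hξpnear : |deriv (deriv f) ξp - c| < A / 4 := by
    apply hnear
    rw [abs_le]
    constructor <;> linarith [hξp.1, hξp.2]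
  have hξmnear : |deriv (deriv f) ξm - c| < A / 4 := by
    apply hnear
    rw [abs_le]
    constructor <;> linarith [hξm.1, hξm.2]
  rw [abs_sub_lt_iff] at hξpnear hξmnear
  have hplus : deriv f (z₀ + δ) = deriv (deriv f) ξp * δ := by
    field_simp at hξpeq
    rw [hz₀, add_sub_cancel_left, sub_zero] at hξpeq; rw [hξpeq, div_mul_cancel₀ _ hδ.ne']
  have hminus : deriv f (z₀ - δ) = -(deriv (deriv f) ξm * δ) := by
    have h : z₀ - (z₀ - δ) = δ := by ring
    rw [h] at hξmeq
    field_simp at hξmeq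
    rw [hz₀] at hξmeq; linarith
  have h34 : 3 * A / 4 * δ = 3 * (A * δ) / 4 := by ring
  have hc0 : c ≠ 0 := hcdef ▸ hz₀''
  -- the key construction for each t in Λ
  have key : ∀ t ∈ Λ, ∃ z : ℝ, deriv f z = 0 ∧ |z - (z₀ + t)| ≤ δ ∧
      (∀ x : ℝ, |x - z| ≤ δ → A / 2 ≤ |deriv (deriv f) x|) := by
    intro t ht
    have hab : z₀ - δ + t < z₀ + δ + t := by linarith
    -- signs of translated endpoint values
    have hma := (htrans t ht (z₀ - δ)).2.1
    have hpa := (htrans t ht (z₀ + δ)).2.1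
    rw [abs_sub_lt_iff] at hma hpa
    have hsigns : (deriv f (z₀ - δ + t) ≤ 0 ∧ 0 ≤ deriv f (z₀ + δ + t)) ∨
        (deriv f (z₀ + δ + t) ≤ 0 ∧ 0 ≤ deriv f (z₀ - δ + t)) := by
      rcases lt_or_gt_of_ne hc0 with hneg | hpos
      · -- c < 0, A = -c
        have hAc : A = -c := hAdef ▸ abs_of_neg hneg
        right
        have hdp : deriv (deriv f) ξp ≤ -(3 * A / 4) := by linarith [hξpnear.1]
        have hdm : deriv (deriv f) ξm ≤ -(3 * A / 4) := by linarith [hξmnear.1]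
        have hfp : deriv (deriv f) ξp * δ ≤ -(3 * A / 4) * δ :=
          mul_le_mul_of_nonneg_right hdp hδ.le
        have hfm : deriv (deriv f) ξm * δ ≤ -(3 * A / 4) * δ :=
          mul_le_mul_of_nonneg_right hdm hδ.le
        constructor
        · -- f'(z₀+δ+t) ≤ 0
          have := hpa.1
          rw [hplus] at this
          linarith [h34, mul_pos hA0 hδ, hεδ]
        · -- 0 ≤ f'(z₀-δ+t)
          have := hma.2
          rw [hminus] at this
          linarith [h34, mul_pos hA0 hδ, hεδ]
      · -- c > 0, A = c
        have hAc : A = c := hAdef ▸ abs_of_pos hpos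
        left
        have hdp : 3 * A / 4 ≤ deriv (deriv f) ξp := by linarith [hξpnear.2]
        have hdm : 3 * A / 4 ≤ deriv (deriv f) ξm := by linarith [hξmnear.2]
        have hfp : 3 * A / 4 * δ ≤ deriv (deriv f) ξp * δ :=
          mul_le_mul_of_nonneg_right hdp hδ.le
        have hfm : 3 * A / 4 * δ ≤ deriv (deriv f) ξm * δ :=
          mul_le_mul_of_nonneg_right hdm hδ.le
        constructor
        · -- f'(z₀-δ+t) ≤ 0
          have := hma.1
          rw [hminus] at this
          linarith [h34, mul_pos hA0 hδ, hεδ]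
        · -- 0 ≤ f'(z₀+δ+t)
          have := hpa.2
          rw [hplus] at this
          linarith [h34, mul_pos hA0 hδ, hεδ]
    -- intermediate value theorem
    have hivt := intermediate_value_uIcc (a := z₀ - δ + t) (b := z₀ + δ + t)
      (f := deriv f) hcont'.continuousOn
    have h0 : (0 : ℝ) ∈ Set.uIcc (deriv f (z₀ - δ + t)) (deriv f (z₀ + δ + t)) := by
      rw [Set.mem_uIcc]
      rcases hsigns with ⟨ha, hb⟩ | ⟨ha, hb⟩
      · exact Or.inl ⟨ha, hb⟩
      · exact Or.inr ⟨ha, hb⟩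
    obtain ⟨z, hzmem, hzval⟩ := hivt h0
    rw [Set.uIcc_of_le hab.le, Set.mem_Icc] at hzmem
    have hzd : |z - (z₀ + t)| ≤ δ := by
      rw [abs_le]; constructor <;> linarith [hzmem.1, hzmem.2]
    refine ⟨z, hzval, hzd, ?_⟩
    intro x hx
    have hxz : |x - t - z₀| ≤ 2 * δ := by
      calc |x - t - z₀| = |(x - z) + (z - (z₀ + t))| := by ring_nf
        _ ≤ |x - z| + |z - (z₀ + t)| := abs_add_le _ _
        _ ≤ 2 * δ := by linarith
    have h2' := hnear _ hxz
    have h3 := (htrans t ht (x - t)).2.2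
    rw [sub_add_cancel] at h3
    have h4 : 3 * A / 4 ≤ |deriv (deriv f) (x - t)| := by
      have habs := abs_sub_abs_le_abs_sub c (deriv (deriv f) (x - t))
      rw [abs_sub_comm] at h2'
      calc 3 * A / 4 = A - A / 4 := by ring
        _ ≤ |c| - |c - deriv (deriv f) (x - t)| := by rw [hAdef]; linarith
        _ ≤ |deriv (deriv f) (x - t)| := by linarith
    have habs2 := abs_sub_abs_le_abs_sub (deriv (deriv f) (x - t)) (deriv (deriv f) x)
    rw [abs_sub_comm] at h3
    linarith
  -- conclusion
  refine ⟨{z : ℝ | deriv f z = 0 ∧ ∀ x : ℝ, |x - z| ≤ δ → A / 2 ≤ |deriv (deriv f) x|},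
    L + δ, A / 2, δ, by linarith, by positivity, hδ, ?_, fun z hz => hz.1, fun z hz => hz.2⟩
  intro x
  obtain ⟨t, ht, hxt⟩ := hdense (x - z₀)
  obtain ⟨z, hz1, hz2, hz3⟩ := key t ht
  refine ⟨z, ⟨hz1, hz3⟩, ?_⟩
  calc |x - z| = |(x - z₀ - t) - (z - (z₀ + t))| := by ring_nf
    _ ≤ |x - z₀ - t| + |z - (z₀ + t)| := abs_sub _ _
    _ ≤ L + δ := by linarith
end

section
/- Let A, B, C be d×d real matrices and ξ_{i−1}, ξ_i, ξ_{i+1} ∈ ℝ^d satisfy A(ξ_i − ξ_{i+1}) − B(ξ_{i−1} − ξ_i) + λ C ξ_i = 0. Suppose σ_max(A) ≤ K/4, σ_max(B) ≤ K/4, λσ_min(C) ≥ K(1 + R/r), and ‖ξ_{i−1}‖ ≤ α‖ξ_i‖ where α < 1 is the smaller root of x² − (2 + 4R/r)x + 1 = 0. Then ‖ξ_i‖ ≤ α‖ξ_{i+1}‖ and ‖(ξ_i, ξ_{i+1})‖ ≥ (1/α)‖(ξ_{i−1}, ξ_i)‖, where ‖(v,w)‖ = √(‖v‖² + ‖w‖²).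 -/
set_option maxHeartbeats 800000 in
/-- Cone-expansion estimate underlying the hyperbolicity of anti-integrable
equilibria. `σ_min(C) ≥ σ` is expressed as `σ‖v‖ ≤ ‖Cv‖` for all `v`, and
`‖(v,w)‖ = √(‖v‖² + ‖w‖²)`. -/
theorem cone_expansion_estimate {d : ℕ}
    (A B C : EuclideanSpace ℝ (Fin d) →L[ℝ] EuclideanSpace ℝ (Fin d))
    (K R r lam α : ℝ)
    (hK : 0 < K) (hR : 0 < R) (hr : 0 < r) (hlam : 0 < lam)
    (hA : ‖A‖ ≤ K / 4) (hB : ‖B‖ ≤ K / 4)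
    (hC : ∀ v : EuclideanSpace ℝ (Fin d), K * (1 + R / r) * ‖v‖ ≤ lam * ‖C v‖)
    (hα0 : 0 < α) (hα1 : α < 1)
    (hαroot : α ^ 2 - (2 + 4 * R / r) * α + 1 = 0)
    (ξp ξ ξn : EuclideanSpace ℝ (Fin d))
    (heq : A (ξ - ξn) - B (ξp - ξ) + lam • C ξ = 0)
    (hξp : ‖ξp‖ ≤ α * ‖ξ‖) :
    ‖ξ‖ ≤ α * ‖ξn‖ ∧
      (1 / α) * Real.sqrt (‖ξp‖ ^ 2 + ‖ξ‖ ^ 2) ≤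
        Real.sqrt (‖ξ‖ ^ 2 + ‖ξn‖ ^ 2) := by
  set a := ‖ξp‖ with ha
  set b := ‖ξ‖ with hb
  set c := ‖ξn‖ with hc
  have ha0 : 0 ≤ a := norm_nonneg _
  have hb0 : 0 ≤ b := norm_nonneg _
  have hc0 : 0 ≤ c := norm_nonneg _
  -- rearrange the equation
  have h1 : lam • C ξ = B (ξp - ξ) - A (ξ - ξn) := by
    rw [← sub_eq_zero, ← heq]; abel
  have h2 : lam * ‖C ξ‖ = ‖lam • C ξ‖ := by
    rw [norm_smul, Real.norm_of_nonneg hlam.le]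
  have h3 : ‖B (ξp - ξ) - A (ξ - ξn)‖ ≤ K / 4 * (a + b) + K / 4 * (b + c) := by
    calc ‖B (ξp - ξ) - A (ξ - ξn)‖ ≤ ‖B (ξp - ξ)‖ + ‖A (ξ - ξn)‖ := norm_sub_le _ _
      _ ≤ ‖B‖ * ‖ξp - ξ‖ + ‖A‖ * ‖ξ - ξn‖ :=
        add_le_add (B.le_opNorm _) (A.le_opNorm _)
      _ ≤ K / 4 * (a + b) + K / 4 * (b + c) := by
        have hpb : ‖ξp - ξ‖ ≤ a + b := norm_sub_le _ _
        have hbc : ‖ξ - ξn‖ ≤ b + c := norm_sub_le _ _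
        have h0B : (0:ℝ) ≤ ‖B‖ := norm_nonneg _
        have h0A : (0:ℝ) ≤ ‖A‖ := norm_nonneg _
        nlinarith [mul_le_mul hB hpb (norm_nonneg _) (by linarith),
          mul_le_mul hA hbc (norm_nonneg _) (by linarith)]
  have hmain : K * (1 + R / r) * b ≤ K / 4 * (a + b) + K / 4 * (b + c) := by
    calc K * (1 + R / r) * b ≤ lam * ‖C ξ‖ := hC ξ
      _ = ‖lam • C ξ‖ := h2
      _ = ‖B (ξp - ξ) - A (ξ - ξn)‖ := by rw [h1]
      _ ≤ _ := h3
  -- divide by K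
  have hlin : (1 + R / r) * b ≤ 1 / 4 * (a + b) + 1 / 4 * (b + c) := by
    have := (mul_le_mul_iff_right₀ hK).mp (by nlinarith : K * ((1 + R / r) * b) ≤ K * (1 / 4 * (a + b) + 1 / 4 * (b + c)))
    linarith
  have hroot' : (α ^ 2 + 1) * b = (2 + 4 * R / r) * α * b := by
    linear_combination b * hαroot
  have hstep : (2 + 4 * R / r) * b - a ≤ c := by
    have h4 : (4 : ℝ) * ((1 + R / r) * b) ≤ 4 * (1 / 4 * (a + b) + 1 / 4 * (b + c)) := by
      linarith
    ring_nf at h4 ⊢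
    linarith
  have hmul : α * ((2 + 4 * R / r) * b - a) ≤ α * c :=
    mul_le_mul_of_nonneg_left hstep hα0.le
  have hexp : α * ((2 + 4 * R / r) * b - a) = (α ^ 2 + 1) * b - α * a := by
    linear_combination (-1 : ℝ) * hroot'
  have hαa : α * a ≤ α ^ 2 * b := by nlinarith [mul_le_mul_of_nonneg_left hξp hα0.le]
  have hfirst : b ≤ α * c := by
    rw [hexp] at hmul; linarith
  refine ⟨hfirst, ?_⟩
  have h5 : a ^ 2 + b ^ 2 ≤ α ^ 2 * (b ^ 2 + c ^ 2) := by
    nlinarith [mul_le_mul hξp hξp ha0 (by positivity),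
      mul_le_mul hfirst hfirst hb0 (by positivity)]
  have h6 : (1 / α) * Real.sqrt (a ^ 2 + b ^ 2) = Real.sqrt ((1 / α) ^ 2 * (a ^ 2 + b ^ 2)) := by
    rw [Real.sqrt_mul (by positivity), Real.sqrt_sq (by positivity)]
  rw [h6]
  apply Real.sqrt_le_sqrt
  calc (1 / α) ^ 2 * (a ^ 2 + b ^ 2) ≤ (1 / α) ^ 2 * (α ^ 2 * (b ^ 2 + c ^ 2)) :=
        mul_le_mul_of_nonneg_left h5 (by positivity)
    _ = b ^ 2 + c ^ 2 := by field_simp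
end
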